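/- Let X, B₁, ..., B_k be finite nonempty subsets of an abelian group such that |X + Bᵢ| ≤ αᵢ|X| for each i. Then there exists a nonempty subset X₁ ⊆ X with |X₁ + B₁ + ⋯ + B_k| ≤ α₁⋯α_k |X₁|. -/

import Mathlib

open Finset Fintype Pointwise

section PRaux

set_option linter.unusedSectionVars false
set_option linter.deprecated false

variable {G : Type*} [AddCommGroup G] [DecidableEq G]

private lemma piFinset_add' {ι G : Type*} [DecidableEq ι] [Fintype ι] [AddCommGroup G]
    [DecidableEq G] (A B : ι → Finset G) :
    piFinset A + piFinset B = piFinset (fun i => A i + B i) := by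
  ext f
  simp only [mem_piFinset]
  constructor
  · intro hf
    rw [Finset.mem_add] at hf
    obtain ⟨g, hg, h, hh, rfl⟩ := hf
    intro i
    exact Finset.add_mem_add (mem_piFinset.1 hg i) (mem_piFinset.1 hh i)
  · intro hf
    have : ∀ i, ∃ g ∈ A i, ∃ h ∈ B i, g + h = f i := by
      intro i; exact Finset.mem_add.1 (hf i)
    choose g hg h hh hsum using this
    rw [Finset.mem_add]
    exact ⟨g, mem_piFinset.2 hg, h, mem_piFinset.2 hh, funext hsum⟩

private lemma piFinset_zero' {ι G : Type*} [DecidableEq ι] [Fintype ι] [AddCommGroup G]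
    [DecidableEq G] : piFinset (fun _ : ι => (0 : Finset G)) = 0 := by
  ext f
  simp only [mem_piFinset, Finset.mem_zero]
  constructor
  · intro hf; funext i; exact hf i
  · rintro rfl i; rfl

private lemma piFinset_sum' {ι G : Type*} [DecidableEq ι] [Fintype ι] [AddCommGroup G]
    [DecidableEq G] {J : Type*} (s : Finset J) (f : J → ι → Finset G) :
    ∑ j ∈ s, piFinset (f j) = piFinset (fun i => ∑ j ∈ s, f j i) := by
  classical
  induction s using Finset.induction_on with
  | empty => simp [piFinset_zero']
  | insert _ _ hx ih =>
      rw [Finset.sum_insert hx, ih, piFinset_add']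
      simp [Finset.sum_insert hx]

private lemma sum_nonempty' {J : Type*} (s : Finset J) (f : J → Finset G)
    (h : ∀ j ∈ s, (f j).Nonempty) : (∑ j ∈ s, f j).Nonempty := by
  classical
  induction s using Finset.induction_on with
  | empty => exact ⟨0, by simp [Finset.zero_mem_zero]⟩
  | insert _ _ hx ih =>
      rw [Finset.sum_insert hx]
      exact (h _ (Finset.mem_insert_self _ _)).add
        (ih fun j hj => h j (Finset.mem_insert_of_mem hj))

private lemma sum_subset' {J : Type*} (s : Finset J) (f g : J → Finset G)
    (h : ∀ j ∈ s, f j ⊆ g j) : ∑ j ∈ s, f j ⊆ ∑ j ∈ s, g j := by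
  classical
  induction s using Finset.induction_on with
  | empty => simp
  | insert _ _ hx ih =>
      rw [Finset.sum_insert hx, Finset.sum_insert hx]
      exact Finset.add_subset_add (h _ (Finset.mem_insert_self _ _))
        (ih fun j hj => h j (Finset.mem_insert_of_mem hj))

private lemma exists_minimizer (X S : Finset G) (hX : X.Nonempty) :
    ∃ U ⊆ X, U.Nonempty ∧ ∀ W ⊆ X, W.Nonempty →
      (#(U + S) : ℝ) * #W ≤ (#(W + S) : ℝ) * #U := by
  have hXmem : X ∈ X.powerset.erase ∅ :=
    Finset.mem_erase_of_ne_of_mem hX.ne_empty (Finset.mem_powerset_self _)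
  obtain ⟨U, hU, hUmin⟩ := Finset.exists_min_image (X.powerset.erase ∅)
    (fun W => (#(W + S) : ℝ) / #W) ⟨X, hXmem⟩
  rw [Finset.mem_erase, Finset.mem_powerset, ← Finset.nonempty_iff_ne_empty] at hU
  refine ⟨U, hU.2, hU.1, fun W hWX hWne => ?_⟩
  have h := hUmin W (Finset.mem_erase_of_ne_of_mem hWne.ne_empty (Finset.mem_powerset.2 hWX))
  have hU0 : (0:ℝ) < #U := by exact_mod_cast hU.1.card_pos
  have hW0 : (0:ℝ) < #W := by exact_mod_cast hWne.card_pos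
  rw [div_le_div_iff₀ hU0 hW0] at h
  linarith

private lemma petridis_pow (A B : Finset G) (hA : A.Nonempty)
    (hmin : ∀ A' ⊆ A, #(A + B) * #A' ≤ #(A' + B) * #A) (r : ℝ) (hr0 : 0 ≤ r)
    (hr : (#(A + B) : ℝ) ≤ r * #A) :
    ∀ h : ℕ, (#(A + ∑ _j : Fin h, B) : ℝ) ≤ r ^ h * #A := by
  intro h
  induction h with
  | zero => simp
  | succ h ih =>
      have hA0 : (0:ℝ) < #A := by exact_mod_cast hA.card_pos
      have hsum : (∑ _j : Fin (h+1), B) = B + ∑ _j : Fin h, B := by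
        rw [Fin.sum_univ_succ]
      rw [hsum, ← add_assoc]
      have hp := Finset.pluennecke_petridis_inequality_add (A := A) (B := B)
        (∑ _j : Fin h, B) hmin
      have hp' : (#(A + B + ∑ _j : Fin h, B) : ℝ) * #A
          ≤ (#(A + B) : ℝ) * #(A + ∑ _j : Fin h, B) := by
          rw [add_comm (∑ _j : Fin h, B) A, add_right_comm A] at hp
          exact_mod_cast hp
      have hq : (#(A + B + ∑ _j : Fin h, B) : ℝ) * #A ≤ (r * #A) * (r ^ h * #A) := by
        calc (#(A + B + ∑ _j : Fin h, B) : ℝ) * #A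
            ≤ (#(A + B) : ℝ) * #(A + ∑ _j : Fin h, B) := hp'
          _ ≤ (r * #A) * (r ^ h * #A) := by
              apply mul_le_mul hr ih (by positivity) (by positivity)
      have h2 : (#(A + B + ∑ _j : Fin h, B) : ℝ) ≤ r ^ (h+1) * #A := by
        rw [pow_succ]
        nlinarith [hq, hA0]
      exact h2

private lemma LCstep {H G' : Type*} [AddCommGroup H] [DecidableEq H]
    [AddCommGroup G'] [DecidableEq G']
    (Y T : Finset H) (ν : ℝ) (hν : 0 ≤ ν)
    (hY : ∀ V ⊆ Y, ν * (#V : ℝ) ≤ (#(V + T) : ℝ))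
    (X S : Finset G') (μ : ℝ) (hμ : 0 ≤ μ)
    (hX : ∀ W ⊆ X, μ * (#W : ℝ) ≤ (#(W + S) : ℝ))
    (hS : S.Nonempty)
    (W : Finset (H × G')) (hW : W ⊆ Y ×ˢ X) :
    (ν * μ) * (#W : ℝ) ≤ (#(W + T ×ˢ S) : ℝ) := by
  classical
  set U : Finset H := W.image Prod.fst with hU
  set F : H → Finset G' := fun y => (W.filter (fun p => p.1 = y)).image Prod.snd with hF
  set w : H → ℕ := fun y => #(F y) with hw
  set A : Finset (H × G') := W + T ×ˢ S with hA
  set P : Finset H := A.image Prod.fst with hP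
  set g : H → ℕ := fun p => #(A.filter (fun q => q.1 = p)) with hg
  set N : ℕ := U.sup w with hN
  set J : Finset ℕ := Finset.Icc 1 N with hJ
  set Ub : ℕ → Finset H := fun j => U.filter (fun y => j ≤ w y) with hUb
  have hFX : ∀ y, F y ⊆ X := by
    intro y z hz
    simp only [hF, Finset.mem_image, Finset.mem_filter] at hz
    obtain ⟨p, ⟨hpW, _⟩, rfl⟩ := hz
    exact (Finset.mem_product.1 (hW hpW)).2
  have hUY : U ⊆ Y := by
    intro y hy
    simp only [hU, Finset.mem_image] at hy
    obtain ⟨p, hpW, rfl⟩ := hy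
    exact (Finset.mem_product.1 (hW hpW)).1
  have f1 : #W = ∑ y ∈ U, w y := by
    rw [Finset.card_eq_sum_card_fiberwise (f := Prod.fst) (t := U)
      (fun p hp => Finset.mem_image_of_mem _ hp)]
    refine Finset.sum_congr rfl fun y _ => ?_
    rw [hw]
    simp only [hF]
    rw [Finset.card_image_of_injOn]
    intro p hp q hq hpq
    simp only [Finset.mem_coe, Finset.mem_filter] at hp hq
    exact Prod.ext (hp.2.trans hq.2.symm) hpq
  have f2 : #A = ∑ p ∈ P, g p :=
    Finset.card_eq_sum_card_fiberwise (fun p hp => Finset.mem_image_of_mem _ hp)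
  have f3 : ∀ p : H, ∀ y ∈ U, p - y ∈ T → μ * (w y : ℝ) ≤ (g p : ℝ) := by
    intro p y _ hpy
    have hsub : F y + S ⊆ (A.filter (fun q => q.1 = p)).image Prod.snd := by
      intro z hz
      rw [Finset.mem_add] at hz
      obtain ⟨x, hx, s, hs, rfl⟩ := hz
      simp only [hF, Finset.mem_image, Finset.mem_filter] at hx
      obtain ⟨q, ⟨hqW, hq1⟩, hq2⟩ := hx
      have hm : q + (p - y, s) ∈ A := Finset.add_mem_add hqW
        (Finset.mem_product.2 ⟨hpy, hs⟩)
      refine Finset.mem_image.2 ⟨q + (p - y, s), Finset.mem_filter.2 ⟨hm, ?_⟩, ?_⟩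
      · show q.1 + (p - y) = p
        rw [hq1]; abel
      · show q.2 + s = x + s
        rw [hq2]
    calc μ * (w y : ℝ) ≤ (#(F y + S) : ℝ) := hX _ (hFX y)
      _ ≤ (#((A.filter (fun q => q.1 = p)).image Prod.snd) : ℝ) := by
          exact_mod_cast Nat.cast_le.2 (Finset.card_le_card hsub)
      _ ≤ (g p : ℝ) := by exact_mod_cast Nat.cast_le.2 (Finset.card_image_le)
  -- layer cake: ∑ w = ∑_j #(Ub j)
  have f5 : ∑ y ∈ U, w y = ∑ j ∈ J, #(Ub j) := by
    have h1 : ∀ j, #(Ub j) = ∑ y ∈ U, if j ≤ w y then 1 else 0 := by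
      intro j; rw [hUb, Finset.card_filter]
    simp_rw [h1]
    rw [Finset.sum_comm]
    refine Finset.sum_congr rfl fun y hy => ?_
    have h2 : ∑ j ∈ J, (if j ≤ w y then 1 else 0)
        = #(J.filter (fun j => j ≤ w y)) := by
      rw [Finset.card_filter]
    rw [h2]
    have h3 : J.filter (fun j => j ≤ w y) = Finset.Icc 1 (w y) := by
      ext j
      simp only [hJ, Finset.mem_filter, Finset.mem_Icc]
      exact ⟨fun ⟨⟨a, _⟩, b⟩ => ⟨a, b⟩,
        fun ⟨a, b⟩ => ⟨⟨a, b.trans (Finset.le_sup hy)⟩, b⟩⟩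
    rw [h3, Nat.card_Icc]; omega
  -- M p and its bounds
  set M : H → ℕ := fun p => (U.filter (fun y => p - y ∈ T)).sup w with hM
  have f6 : ∀ p, μ * (M p : ℝ) ≤ (g p : ℝ) := by
    intro p
    rcases (U.filter (fun y => p - y ∈ T)).eq_empty_or_nonempty with he | hne
    · rw [hM]; simp only [he, Finset.sup_empty]
      simpa using Nat.cast_nonneg (g p)
    · obtain ⟨y, hy, hyeq⟩ := Finset.exists_mem_eq_sup _ hne w
      show μ * (((U.filter (fun y => p - y ∈ T)).sup w : ℕ) : ℝ) ≤ (g p : ℝ)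
      rw [hyeq]
      rw [Finset.mem_filter] at hy
      exact f3 p y hy.1 hy.2
  have f7 : ∀ p, #(J.filter (fun j => p ∈ Ub j + T)) ≤ M p := by
    intro p
    have hsub : J.filter (fun j => p ∈ Ub j + T) ⊆ Finset.Icc 1 (M p) := by
      intro j hj
      rw [Finset.mem_filter] at hj
      obtain ⟨hjJ, hmem⟩ := hj
      rw [Finset.mem_add] at hmem
      obtain ⟨y, hy, t, ht, hyt⟩ := hmem
      rw [hUb, Finset.mem_filter] at hy
      have hpy : p - y ∈ T := by
        have : p - y = t := by rw [← hyt]; abel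
        rwa [this]
      have : w y ≤ M p := Finset.le_sup (Finset.mem_filter.2 ⟨hy.1, hpy⟩)
      rw [hJ, Finset.mem_Icc] at hjJ
      exact Finset.mem_Icc.2 ⟨hjJ.1, le_trans hy.2 this⟩
    calc #(J.filter (fun j => p ∈ Ub j + T)) ≤ #(Finset.Icc 1 (M p)) :=
          Finset.card_le_card hsub
      _ = M p := by rw [Nat.card_Icc]; omega
  -- Ub j + T ⊆ P for j ∈ J
  have f8 : ∀ j ∈ J, Ub j + T ⊆ P := by
    intro j hj p hp
    rw [Finset.mem_add] at hp
    obtain ⟨y, hy, t, ht, rfl⟩ := hp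
    rw [hUb, Finset.mem_filter] at hy
    rw [hJ, Finset.mem_Icc] at hj
    have hwy : 0 < w y := lt_of_lt_of_le hj.1 hy.2
    rw [hw, Finset.card_pos] at hwy
    obtain ⟨x, hx⟩ := hwy
    simp only [hF, Finset.mem_image, Finset.mem_filter] at hx
    obtain ⟨q, ⟨hqW, hq1⟩, hq2⟩ := hx
    obtain ⟨s, hs⟩ := hS
    have : q + (t, s) ∈ A := Finset.add_mem_add hqW (Finset.mem_product.2 ⟨ht, hs⟩)
    refine Finset.mem_image.2 ⟨q + (t, s), this, ?_⟩
    show q.1 + t = y + t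
    rw [hq1]
  -- counting swap: ∑_{j∈J} #(Ub j + T) = ∑_{p∈P} #(J.filter (p ∈ Ub j + T))
  have f9 : ∑ j ∈ J, #(Ub j + T) = ∑ p ∈ P, #(J.filter (fun j => p ∈ Ub j + T)) := by
    have h1 : ∀ j ∈ J, #(Ub j + T) = ∑ p ∈ P, if p ∈ Ub j + T then 1 else 0 := by
      intro j hj
      rw [← Finset.card_filter]
      congr 1
      ext p
      simp only [Finset.mem_filter]
      exact ⟨fun hp => ⟨f8 j hj hp, hp⟩, fun h => h.2⟩
    rw [Finset.sum_congr rfl h1, Finset.sum_comm]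
    refine Finset.sum_congr rfl fun p _ => ?_
    rw [Finset.card_filter]
  -- final chain
  have hμν : 0 ≤ ν * μ := mul_nonneg hν hμ
  have key : (ν * μ) * (#W : ℝ) ≤ ∑ p ∈ P, (g p : ℝ) := by
    calc (ν * μ) * (#W : ℝ) = μ * (ν * (∑ y ∈ U, (w y : ℝ))) := by
          rw [f1]; push_cast; ring
      _ = μ * (ν * (∑ j ∈ J, (#(Ub j) : ℝ))) := by
          have f5' : (∑ y ∈ U, (w y : ℝ)) = ∑ j ∈ J, (#(Ub j) : ℝ) := by
            rw [← Nat.cast_sum, ← Nat.cast_sum, f5]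
          rw [f5']
      _ ≤ μ * (∑ j ∈ J, (#(Ub j + T) : ℝ)) := by
          refine mul_le_mul_of_nonneg_left ?_ hμ
          rw [Finset.mul_sum]
          exact Finset.sum_le_sum fun j _ => hY _ ((Finset.filter_subset _ _).trans hUY)
      _ = μ * (∑ p ∈ P, (#(J.filter (fun j => p ∈ Ub j + T)) : ℝ)) := by
          rw [← Nat.cast_sum, ← Nat.cast_sum, f9]
      _ ≤ μ * (∑ p ∈ P, (M p : ℝ)) := by
          refine mul_le_mul_of_nonneg_left ?_ hμ
          exact Finset.sum_le_sum fun p _ => Nat.cast_le.2 (f7 p)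
      _ = ∑ p ∈ P, μ * (M p : ℝ) := Finset.mul_sum _ _ _
      _ ≤ ∑ p ∈ P, (g p : ℝ) := Finset.sum_le_sum fun p _ => f6 p
  calc (ν * μ) * (#W : ℝ) ≤ ∑ p ∈ P, (g p : ℝ) := key
    _ = (#A : ℝ) := by rw [f2]; push_cast; ring

private def finSuccAddEquiv {G : Type*} [AddCommGroup G] (n : ℕ) :
    (Fin (n + 1) → G) ≃+ G × (Fin n → G) where
  toEquiv := (Fin.consEquiv fun _ => G).symm
  map_add' _ _ := rfl

private lemma finSuccAddEquiv_apply {G : Type*} [AddCommGroup G] (n : ℕ) (f : Fin (n+1) → G) :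
    finSuccAddEquiv n f = (f 0, fun i : Fin n => f i.succ) := rfl

private lemma image_finSucc_piFinset {G : Type*} [AddCommGroup G] [DecidableEq G]
    (n : ℕ) (A : Finset G) :
    (piFinset (fun _ : Fin (n+1) => A)).image (finSuccAddEquiv n)
      = A ×ˢ piFinset (fun _ : Fin n => A) := by
  ext ⟨a, v⟩
  simp only [Finset.mem_image, mem_piFinset, Finset.mem_product]
  constructor
  · rintro ⟨f, hf, heq⟩
    rw [finSuccAddEquiv_apply, Prod.mk.injEq] at heq
    obtain ⟨h1, h2⟩ := heq
    subst h1; subst h2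
    exact ⟨hf 0, fun i => hf i.succ⟩
  · rintro ⟨ha, hv⟩
    refine ⟨Fin.cons a v, fun i => ?_, ?_⟩
    · refine Fin.cases ?_ ?_ i
      · simpa using ha
      · intro j; simpa using hv j
    · rw [finSuccAddEquiv_apply]
      simp

private lemma LC (X S : Finset G) (μ : ℝ) (hμ : 0 ≤ μ) (hS : S.Nonempty)
    (hexp : ∀ W ⊆ X, μ * (#W : ℝ) ≤ (#(W + S) : ℝ)) :
    ∀ (n : ℕ) (V : Finset (Fin n → G)), V ⊆ piFinset (fun _ => X) →
      μ ^ n * (#V : ℝ) ≤ (#(V + piFinset (fun _ : Fin n => S)) : ℝ) := by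
  intro n
  induction n with
  | zero =>
      intro V _
      have h0 : piFinset (fun _ : Fin 0 => S) = 0 := by
        ext f
        simp only [mem_piFinset, Finset.mem_zero]
        constructor
        · intro _; funext i; exact i.elim0
        · intro _ i; exact i.elim0
      rw [h0, add_zero V, pow_zero, one_mul]
  | succ n ih =>
      intro V hV
      set e := (finSuccAddEquiv (G := G) n) with he
      have hinj : Function.Injective e := e.injective
      have hcard : #V = #(V.image e) := (Finset.card_image_of_injective _ hinj).symm
      have himg : (V + piFinset (fun _ : Fin (n+1) => S)).image e
          = V.image e + S ×ˢ piFinset (fun _ : Fin n => S) := by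
        rw [Finset.image_add e, image_finSucc_piFinset]
      have hsub : V.image e ⊆ X ×ˢ piFinset (fun _ : Fin n => X) := by
        rw [← image_finSucc_piFinset]
        exact Finset.image_subset_image hV
      have hstep := LCstep X S μ hμ hexp
        (piFinset (fun _ : Fin n => X)) (piFinset (fun _ : Fin n => S)) (μ ^ n)
        (by positivity) ih (Fintype.piFinset_nonempty.2 fun _ => hS) (V.image e) hsub
      calc μ ^ (n+1) * (#V : ℝ) = (μ * μ ^ n) * (#(V.image e) : ℝ) := by
            rw [← hcard, pow_succ]; ring
        _ ≤ (#(V.image e + S ×ˢ piFinset (fun _ : Fin n => S)) : ℝ) := hstep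
        _ = (#(V + piFinset (fun _ : Fin (n+1) => S)) : ℝ) := by
            rw [← himg, Finset.card_image_of_injective _ hinj]

end PRaux

theorem plunnecke_ruzsa {G : Type*} [AddCommGroup G] [DecidableEq G]
    (k : ℕ) (X : Finset G) (B : Fin k → Finset G) (α : Fin k → ℝ)
    (hX : X.Nonempty) (hB : ∀ i, (B i).Nonempty) (hα : ∀ i, 0 < α i)
    (h : ∀ i, ((X + B i).card : ℝ) ≤ α i * X.card) :
    ∃ X₁ ⊆ X, X₁.Nonempty ∧
      ((X₁ + ∑ i, B i).card : ℝ) ≤ (∏ i, α i) * X₁.card := by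
  classical
  rcases Nat.eq_zero_or_pos k with hk0 | hkpos
  · subst hk0
    refine ⟨X, subset_rfl, hX, ?_⟩
    simp only [Finset.univ_eq_empty, Finset.sum_empty, Finset.prod_empty, one_mul]
    rw [add_zero X]
  haveI : NeZero k := ⟨hkpos.ne'⟩
  set S : Finset G := ∑ i, B i with hSdef
  have hSne : S.Nonempty := sum_nonempty' _ _ (fun j _ => hB j)
  obtain ⟨W₀, hW₀X, hW₀ne, hW₀min⟩ := exists_minimizer X S hX
  have hW₀0 : (0:ℝ) < #W₀ := by exact_mod_cast hW₀ne.card_pos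
  set μ : ℝ := (#(W₀ + S) : ℝ) / #W₀ with hμdef
  have hμ0 : 0 ≤ μ := by positivity
  have hexp : ∀ W ⊆ X, μ * (#W : ℝ) ≤ (#(W + S) : ℝ) := by
    intro W hWX
    rcases W.eq_empty_or_nonempty with rfl | hWne
    · simp
    have hW0 : (0:ℝ) < #W := by exact_mod_cast hWne.card_pos
    have := hW₀min W hWX hWne
    rw [hμdef, div_mul_eq_mul_div, div_le_iff₀ hW₀0]
    linarith
  set P : ℝ := ∏ i, α i with hPdef
  have hP0 : 0 < P := Finset.prod_pos (fun i _ => hα i)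
  have hX0 : (0:ℝ) < #X := by exact_mod_cast hX.card_pos
  -- the key tensor-power bound
  have key : ∀ m : ℕ, μ ^ (k * m) ≤ (k : ℝ) ^ k * P ^ (k * m) := by
    intro m
    set K := Fin k → G with hK
    set XK : Finset K := piFinset (fun _ => X) with hXK
    set C : Fin k → Finset K := fun j => piFinset (fun i => B (i + j)) with hC
    set D : Finset K := piFinset (fun _ => S) with hD
    have hXKne : XK.Nonempty := Fintype.piFinset_nonempty.2 fun _ => hX
    have hDne : D.Nonempty := Fintype.piFinset_nonempty.2 fun _ => hSne
    have hCD : ∑ j, C j = D := by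
      rw [hC, piFinset_sum']
      refine congrArg _ (funext fun i => ?_)
      exact Fintype.sum_equiv (Equiv.addLeft i) (fun j => B (i + j)) B (fun j => rfl)
    -- level-k expansion
    have hexpK : ∀ V ⊆ XK, μ ^ k * (#V : ℝ) ≤ (#(V + D) : ℝ) :=
      fun V hV => LC X S μ hμ0 hSne hexp k V hV
    -- level-m objects
    set L := Fin m → K with hL
    set XL : Finset L := piFinset (fun _ => XK) with hXL
    set Bm : Finset L := Finset.univ.biUnion
      (fun j : Fin k => piFinset (fun _ : Fin m => C j)) with hBm
    set Dm : Finset L := piFinset (fun _ => D) with hDm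
    have hXLne : XL.Nonempty := Fintype.piFinset_nonempty.2 fun _ => hXKne
    have hexpL : ∀ V ⊆ XL, (μ ^ k) ^ m * (#V : ℝ) ≤ (#(V + Dm) : ℝ) :=
      fun V hV => LC XK D (μ ^ k) (by positivity) hDne hexpK m V hV
    obtain ⟨Wm, hWmX, hWmne, hWmmin⟩ := exists_minimizer XL Bm hXLne
    have hWm0 : (0:ℝ) < #Wm := by exact_mod_cast hWmne.card_pos
    -- ℕ-form Petridis hypothesis
    have hminN : ∀ A' ⊆ Wm, #(Wm + Bm) * #A' ≤ #(A' + Bm) * #Wm := by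
      intro A' hA'
      rcases A'.eq_empty_or_nonempty with rfl | hA'ne
      · simp
      have := hWmmin A' (hA'.trans hWmX) hA'ne
      exact_mod_cast this
    -- ratio bound: #(Wm+Bm) ≤ (k * P^m) * #Wm
    have hρ : (#(Wm + Bm) : ℝ) ≤ ((k : ℝ) * P ^ m) * #Wm := by
      -- #(XL + Bm) ≤ k * (P * #X^k)^m  and  #XL = (#X^k)^m
      have hXLcard : (#XL : ℝ) = ((#X : ℝ) ^ k) ^ m := by
        rw [hXL, Fintype.card_piFinset]
        push_cast
        rw [Finset.prod_const, Finset.card_univ, Fintype.card_fin]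
        congr 1
        rw [hXK, Fintype.card_piFinset]
        push_cast
        rw [Finset.prod_const, Finset.card_univ, Fintype.card_fin]
      have hXKC : ∀ j : Fin k, (#(XK + C j) : ℝ) ≤ P * (#X : ℝ) ^ k := by
        intro j
        rw [hXK, hC, piFinset_add', Fintype.card_piFinset]
        push_cast
        calc (∏ i : Fin k, (#(X + B (i + j)) : ℝ))
            ≤ ∏ i : Fin k, (α (i + j) * #X) := by
              refine Finset.prod_le_prod (fun i _ => by positivity) (fun i _ => h (i + j))
          _ = (∏ i : Fin k, α (i + j)) * (#X : ℝ) ^ k := by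
              rw [Finset.prod_mul_distrib, Finset.prod_const, Finset.card_univ,
                Fintype.card_fin]
          _ = P * (#X : ℝ) ^ k := by
              rw [hPdef]
              congr 1
              exact Fintype.prod_equiv (Equiv.addRight j) _ _ (fun i => rfl)
      have hXLBm : (#(XL + Bm) : ℝ) ≤ (k : ℝ) * (P * (#X : ℝ) ^ k) ^ m := by
        have hsub : XL + Bm ⊆ Finset.univ.biUnion
            (fun j : Fin k => XL + piFinset (fun _ : Fin m => C j)) := by
          intro z hz
          rw [Finset.mem_add] at hz
          obtain ⟨x, hx, b, hb, rfl⟩ := hz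
          rw [hBm, Finset.mem_biUnion] at hb
          obtain ⟨j, hj, hbj⟩ := hb
          exact Finset.mem_biUnion.2 ⟨j, hj, Finset.add_mem_add hx hbj⟩
        calc (#(XL + Bm) : ℝ) ≤ ∑ j : Fin k, (#(XL + piFinset (fun _ : Fin m => C j)) : ℝ) := by
              exact_mod_cast (Nat.cast_le (α := ℝ)).2
                ((Finset.card_le_card hsub).trans (Finset.card_biUnion_le))
          _ ≤ ∑ _j : Fin k, (P * (#X : ℝ) ^ k) ^ m := by
              refine Finset.sum_le_sum (fun j _ => ?_)
              rw [hXL, piFinset_add', Fintype.card_piFinset]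
              push_cast
              rw [Finset.prod_const, Finset.card_univ, Fintype.card_fin]
              exact pow_le_pow_left₀ (by positivity) (hXKC j) m
          _ = (k : ℝ) * (P * (#X : ℝ) ^ k) ^ m := by
              rw [Finset.sum_const, Finset.card_univ, Fintype.card_fin, nsmul_eq_mul]
      have hXL0 : (0:ℝ) < #XL := by exact_mod_cast hXLne.card_pos
      have hmin' := hWmmin XL subset_rfl hXLne
      -- #(Wm+Bm) * #XL ≤ #(XL+Bm) * #Wm ≤ k (P #X^k)^m #Wm
      have : (#(Wm + Bm) : ℝ) * #XL ≤ ((k : ℝ) * (P * (#X : ℝ) ^ k) ^ m) * #Wm := by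
        calc (#(Wm + Bm) : ℝ) * #XL ≤ (#(XL + Bm) : ℝ) * #Wm := hmin'
          _ ≤ ((k : ℝ) * (P * (#X : ℝ) ^ k) ^ m) * #Wm := by
              exact mul_le_mul_of_nonneg_right hXLBm (le_of_lt hWm0)
      rw [hXLcard] at this
      have hexpand : ((k : ℝ) * (P * (#X : ℝ) ^ k) ^ m)
          = ((k : ℝ) * P ^ m) * ((#X : ℝ) ^ k) ^ m := by
        rw [mul_pow]; ring
      rw [hexpand] at this
      have hpow0 : (0:ℝ) < ((#X : ℝ) ^ k) ^ m := by positivity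
      nlinarith [this, hpow0, hWm0]
    -- Petridis power in L
    have hpet := petridis_pow Wm Bm hWmne hminN ((k : ℝ) * P ^ m)
      (by positivity) hρ k
    -- Dm ⊆ k-fold sum of Bm
    have hDmsub : Dm ⊆ ∑ _j : Fin k, Bm := by
      have h1 : Dm = ∑ j : Fin k, piFinset (fun _ : Fin m => C j) := by
        rw [piFinset_sum', hDm]
        exact congrArg _ (funext fun i => by rw [hCD])
      rw [h1]
      exact sum_subset' _ _ _ (fun j _ =>
        Finset.subset_biUnion_of_mem (fun j => piFinset (fun _ : Fin m => C j))
          (Finset.mem_univ j))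
    -- combine
    have hLC := hexpL Wm hWmX
    have hchain : (μ ^ k) ^ m * (#Wm : ℝ) ≤ ((k : ℝ) * P ^ m) ^ k * #Wm := by
      calc (μ ^ k) ^ m * (#Wm : ℝ) ≤ (#(Wm + Dm) : ℝ) := hLC
        _ ≤ (#(Wm + ∑ _j : Fin k, Bm) : ℝ) := by
            exact_mod_cast (Nat.cast_le (α := ℝ)).2
              (Finset.card_le_card (Finset.add_subset_add_left hDmsub))
        _ ≤ ((k : ℝ) * P ^ m) ^ k * #Wm := hpet
    have h2 : (μ ^ k) ^ m ≤ ((k : ℝ) * P ^ m) ^ k := by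
      nlinarith [hchain, hWm0]
    calc μ ^ (k * m) = (μ ^ k) ^ m := by rw [pow_mul]
      _ ≤ ((k : ℝ) * P ^ m) ^ k := h2
      _ = (k : ℝ) ^ k * P ^ (k * m) := by
          rw [mul_pow, ← pow_mul, Nat.mul_comm m k]
  -- conclude μ ≤ P
  have hμP : μ ≤ P := by
    by_contra hcon
    push_neg at hcon
    set q : ℝ := μ / P with hq
    have hq1 : 1 < q := by
      rw [hq, lt_div_iff₀ hP0]; linarith
    obtain ⟨m, hm⟩ := pow_unbounded_of_one_lt ((k : ℝ) ^ k) hq1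
    have hkey := key m
    have hqkm : q ^ m ≤ q ^ (k * m) := pow_le_pow_right₀ hq1.le
      (Nat.le_mul_of_pos_left m hkpos)
    have hqpow : q ^ (k * m) = μ ^ (k * m) / P ^ (k * m) := by
      rw [hq, div_pow]
    have hPkm0 : (0:ℝ) < P ^ (k * m) := by positivity
    have : q ^ (k * m) ≤ (k : ℝ) ^ k := by
      rw [hqpow, div_le_iff₀ hPkm0]
      linarith [hkey]
    linarith [lt_of_lt_of_le hm (hqkm.trans this)]
  refine ⟨W₀, hW₀X, hW₀ne, ?_⟩
  have : (#(W₀ + S) : ℝ) = μ * #W₀ := by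
    rw [hμdef]; field_simp
  rw [this]
  exact mul_le_mul_of_nonneg_right hμP (le_of_lt hW₀0)
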